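/- For any ω ∈ ℝ³, the closed-form Cayley map satisfies I₃ + (4/(4+‖ω‖²))(ω̂ + ω̂²/2) = (I₃ - ω̂/2)⁻¹ (I₃ + ω̂/2), and in particular the matrix I₃ - ω̂/2 is invertible. -/
import Mathlib


open Matrix

def hat (x : Fin 3 → ℝ) : Matrix (Fin 3) (Fin 3) ℝ :=
  !![0, -x 2, x 1; x 2, 0, -x 0; -x 1, x 0, 0]

set_option maxHeartbeats 1600000 in
/-- The closed form of the Cayley map on `𝔰𝔬(3)`: the matrix `I₃ - ω̂/2` is
invertible and `I₃ + (4/(4+‖ω‖²))(ω̂ + ω̂²/2) = (I₃ - ω̂/2)⁻¹ (I₃ + ω̂/2)`. -/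
theorem caySO3_closed_form (ω : Fin 3 → ℝ) :
    IsUnit (1 - (1 / 2 : ℝ) • hat ω) ∧
      1 + (4 / (4 + (ω 0 ^ 2 + ω 1 ^ 2 + ω 2 ^ 2))) • (hat ω + (1 / 2 : ℝ) • (hat ω ^ 2)) =
        (1 - (1 / 2 : ℝ) • hat ω)⁻¹ * (1 + (1 / 2 : ℝ) • hat ω) := by
  set A := 1 - (1 / 2 : ℝ) • hat ω with hA
  have hs : (0:ℝ) < 4 + (ω 0 ^ 2 + ω 1 ^ 2 + ω 2 ^ 2) := by positivity
  have hdet : A.det = 1 + (ω 0 ^ 2 + ω 1 ^ 2 + ω 2 ^ 2) / 4 := by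
    simp [hA, hat, det_fin_three, Matrix.one_fin_three]
    ring
  have hunit : IsUnit A := by
    apply isUnit_iff_isUnit_det _ |>.mpr
    simp [hdet]
    nlinarith
  refine ⟨hunit, ?_⟩
  have key : A * (1 + (4 / (4 + (ω 0 ^ 2 + ω 1 ^ 2 + ω 2 ^ 2))) • (hat ω + (1 / 2 : ℝ) • (hat ω ^ 2))) = 1 + (1 / 2 : ℝ) • hat ω := by
    have hne : (4 + (ω 0 ^ 2 + ω 1 ^ 2 + ω 2 ^ 2)) ≠ 0 := ne_of_gt hs
    have hne' : ((4:ℝ) + (ω 0 * ω 0 + ω 1 * ω 1 + ω 2 * ω 2)) ≠ 0 := by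
      nlinarith [mul_self_nonneg (ω 0), mul_self_nonneg (ω 1), mul_self_nonneg (ω 2)]
    ext i j
    fin_cases i <;> fin_cases j <;>
      simp [hA, hat, pow_two, Matrix.mul_apply, Fin.sum_univ_three, Matrix.one_apply,
        Matrix.smul_apply, Matrix.add_apply, Matrix.sub_apply]
    all_goals field_simp
    all_goals ring
  calc 1 + (4 / (4 + (ω 0 ^ 2 + ω 1 ^ 2 + ω 2 ^ 2))) • (hat ω + (1 / 2 : ℝ) • (hat ω ^ 2))
      = A⁻¹ * (A * (1 + (4 / (4 + (ω 0 ^ 2 + ω 1 ^ 2 + ω 2 ^ 2))) • (hat ω + (1 / 2 : ℝ) • (hat ω ^ 2)))) := by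
        rw [← Matrix.mul_assoc, Matrix.nonsing_inv_mul _ (isUnit_iff_isUnit_det _ |>.mp hunit), Matrix.one_mul]
    _ = A⁻¹ * (1 + (1 / 2 : ℝ) • hat ω) := by rw [key]
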